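/- (Pointwise nondegeneracy of the canonical multisymplectic form on the bundle of k-forms.) Let V be a finite-dimensional real vector space and let k be a natural number with 1 ≤ k ≤ dim V. Let Λ^k V* denote the space of alternating k-linear forms on V. Suppose v₀ ∈ V and α₀ ∈ Λ^k V* are such that for every choice of pairs (v₁, α₁), …, (v_k, α_k) ∈ V × Λ^k V* one has Σ_{i=0}^{k} (−1)^i · α_i(v₀, …, v_{i−1}, v_{i+1}, …, v_k) = 0 (where in the i-th summand α_i is evaluated on the k vectors obtained by omitting v_i from v₀, …, v_k). Then v₀ = 0 and α₀ = 0. -/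

import Mathlib

lemma exists_alt (V : Type*) [AddCommGroup V] [Module ℝ V] [FiniteDimensional ℝ V]
    (k : ℕ) [NeZero k] (hk2 : k ≤ Module.finrank ℝ V)
    (v₀ : V) (hv : v₀ ≠ 0) :
    ∃ (β : V [⋀^Fin k]→ₗ[ℝ] ℝ) (w : Fin k → V), w 0 = v₀ ∧ β w ≠ 0 := by
  haveI : NeZero (Module.finrank ℝ V) := ⟨by have := NeZero.pos k; omega⟩
  set n := Module.finrank ℝ V with hn
  let b := Module.finBasis ℝ V
  obtain ⟨m, hm⟩ : ∃ m, b.repr v₀ m ≠ 0 := by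
    by_contra hc
    push_neg at hc
    apply hv
    have : b.repr v₀ = 0 := Finsupp.ext hc
    simpa using congrArg b.repr.symm this
  let g : Fin k → Fin n := fun i => Equiv.swap 0 m (Fin.castLE hk2 i)
  have hg : Function.Injective g :=
    (Equiv.injective _).comp (Fin.castLE_injective hk2)
  have hg0 : g 0 = m := by
    have h0 : Fin.castLE hk2 (0 : Fin k) = 0 := rfl
    simp [g, h0]
  let f : V →ₗ[ℝ] (Fin k → ℝ) := LinearMap.pi fun j => b.coord (g j)
  let β := ((Pi.basisFun ℝ (Fin k)).det).compLinearMap f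
  let w : Fin k → V := fun j => if j = 0 then v₀ else b (g j)
  have hM : (Pi.basisFun ℝ (Fin k)).toMatrix (f ∘ w)
      = Matrix.updateCol 1 0 (fun i => b.repr v₀ (g i)) := by
    ext i j
    rw [Module.Basis.toMatrix_apply]
    by_cases hj : j = 0
    · subst hj
      simp [w, f, Matrix.updateCol_self, Module.Basis.coord_apply]
    · simp only [Matrix.updateCol_ne hj, w, if_neg hj, Function.comp]
      simp only [Pi.basisFun_repr, f, LinearMap.pi_apply, Module.Basis.coord_apply,
        Module.Basis.repr_self]
      rw [Finsupp.single_apply]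
      simp [Matrix.one_apply, hg.eq_iff, eq_comm]
  have hβ : β w = b.repr v₀ m := by
    have h1 : β w = Matrix.det ((Pi.basisFun ℝ (Fin k)).toMatrix (f ∘ w)) := by
      rw [← Module.Basis.det_apply]
      simp [β, AlternatingMap.compLinearMap_apply, Function.comp]
      rfl
    rw [h1, hM, ← Matrix.cramer_apply, Matrix.cramer_one]
    simp [hg0]
  exact ⟨β, w, by simp [w], by rw [hβ]; exact hm⟩



/-- (Pointwise nondegeneracy of the canonical multisymplectic form on the
bundle of `k`-forms.)  Let `V` be a finite-dimensional real vector space and `1 ≤ k ≤ dim V`.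
Suppose `v₀ ∈ V` and `α₀ ∈ Λᵏ V*` are such that for every choice of pairs
`(v₁, α₁), …, (v_k, α_k) ∈ V × Λᵏ V*` one has
`Σ_{i=0}^{k} (−1)ⁱ αᵢ(v₀, …, v̂ᵢ, …, v_k) = 0`
(the `i`-th summand evaluating `αᵢ` on the `k` vectors obtained by omitting `vᵢ`).
Then `v₀ = 0` and `α₀ = 0`. -/
theorem canonical_form_nondegenerate
    (V : Type*) [AddCommGroup V] [Module ℝ V] [FiniteDimensional ℝ V]
    (k : ℕ) (hk1 : 1 ≤ k) (hk2 : k ≤ Module.finrank ℝ V)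
    (v₀ : V) (α₀ : V [⋀^Fin k]→ₗ[ℝ] ℝ)
    (h : ∀ q : Fin k → V × (V [⋀^Fin k]→ₗ[ℝ] ℝ),
      ∑ i : Fin (k+1),
        ((-1 : ℝ) ^ (i : ℕ)) *
          ((Fin.cons (v₀, α₀) q : Fin (k+1) → V × (V [⋀^Fin k]→ₗ[ℝ] ℝ)) i).2
            (fun j : Fin k =>
              ((Fin.cons (v₀, α₀) q : Fin (k+1) → V × (V [⋀^Fin k]→ₗ[ℝ] ℝ))
                (i.succAbove j)).1) = 0) :
    v₀ = 0 ∧ α₀ = 0 := by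
  haveI : NeZero k := ⟨by omega⟩
  have hα : α₀ = 0 := by
    ext w
    have hw := h (fun i => (w i, 0))
    rw [Fin.sum_univ_succ] at hw
    simpa [Fin.zero_succAbove] using hw
  have hv : v₀ = 0 := by
    by_contra hv
    obtain ⟨β, w, hw0, hβ⟩ := exists_alt V k hk2 v₀ hv
    set q : Fin k → V × (V [⋀^Fin k]→ₗ[ℝ] ℝ) :=
      fun i => (w i, if i = 0 then β else 0) with hq
    have hw := h q
    rw [Fin.sum_univ_succ] at hw
    have hargs : (fun j : Fin k =>
        ((Fin.cons (v₀, α₀) q : Fin (k+1) → V × (V [⋀^Fin k]→ₗ[ℝ] ℝ))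
          ((Fin.succ (0 : Fin k)).succAbove j)).1) = w := by
      funext j
      by_cases hj : j = 0
      · subst hj
        have h1 : (Fin.succ (0 : Fin k)).succAbove 0 = 0 := by
          rw [Fin.succAbove_of_castSucc_lt]
          · rfl
          · simp only [Fin.lt_def, Fin.coe_castSucc, Fin.val_succ]
            have : ((0 : Fin k) : ℕ) = 0 := rfl
            omega
        rw [h1, Fin.cons_zero, hw0]
      · have h1 : (Fin.succ (0 : Fin k)).succAbove j = j.succ := by
          rw [Fin.succAbove_of_le_castSucc]
          simp only [Fin.le_def, Fin.val_succ, Fin.coe_castSucc]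
          have : (j : ℕ) ≠ 0 := by intro h; exact hj (Fin.ext (h.trans rfl))
          have : ((0 : Fin k) : ℕ) = 0 := rfl
          omega
        rw [h1, Fin.cons_succ]
    have hsum : ∑ i : Fin k, ((-1:ℝ)^((i.succ : Fin (k+1)) : ℕ) *
        ((Fin.cons (v₀, α₀) q : Fin (k+1) → V × (V [⋀^Fin k]→ₗ[ℝ] ℝ)) i.succ).2
          (fun j : Fin k =>
            ((Fin.cons (v₀, α₀) q : Fin (k+1) → V × (V [⋀^Fin k]→ₗ[ℝ] ℝ))
              ((i.succ).succAbove j)).1)) = -(β w) := by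
      rw [Finset.sum_eq_single (0 : Fin k)]
      · rw [hargs]
        have e1 : ((Fin.succ (0 : Fin k) : Fin (k+1)) : ℕ) = 1 := by
          have : ((0 : Fin k) : ℕ) = 0 := rfl
          simp [Fin.val_succ, this]
          omega
        have e2 : (Fin.cons (v₀, α₀) q : Fin (k+1) → V × (V [⋀^Fin k]→ₗ[ℝ] ℝ))
            (Fin.succ (0 : Fin k)) = q 0 := Fin.cons_succ _ _ _
        rw [e1, e2]
        simp [q]
      · intro i _ hi
        simp [q, hi]
      · simp
    rw [hsum, hα] at hw
    simp at hw
    exact hβ hw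
  exact ⟨hv, hα⟩
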